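/- Let N be a positive integer, H an additive subgroup of ZMod N, and a, b : ZMod N. If f₁, f₂ : ZMod N → ℂ both satisfy supp fᵢ ⊆ a + H and supp 𝓕 fᵢ ⊆ b + H^⊥, and f₁ is nonzero, then there exists λ ∈ ℂ with f₂ = λ · f₁. (This is Corollary 3.17 of the paper — there is at most one element, up to scalar, whose support lies in a given shift B_g of a biprojection and whose Fourier support lies in a given shift B̃_h of the dual biprojection — specialized to L^∞(ℤ/Nℤ).) -/

import Mathlib

open Complex Finset

/-- The unitary discrete Fourier transform on `ZMod N`. -/
noncomputable def dft (N : ℕ) [NeZero N] (f : ZMod N → ℂ) : ZMod N → ℂ :=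
  fun k => (((N : ℝ) ^ (-(1/2 : ℝ)) : ℝ) : ℂ) *
    ∑ x : ZMod N, f x *
      Complex.exp (-2 * Real.pi * Complex.I * (k.val : ℂ) * (x.val : ℂ) / (N : ℂ))

lemma dft_eq_zmod_dft (N : ℕ) [NeZero N] (f : ZMod N → ℂ) (k : ZMod N) :
    dft N f k = (((N : ℝ) ^ (-(1/2 : ℝ)) : ℝ) : ℂ) * ZMod.dft f k := by
  rw [dft, ZMod.dft_apply]
  congr 1
  refine Finset.sum_congr rfl fun x _ => ?_
  have h1 : -(x * k) = ((-(x.val * k.val : ℤ) : ℤ) : ZMod N) := by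
    push_cast
    rw [ZMod.natCast_val, ZMod.natCast_val, ZMod.cast_id, ZMod.cast_id]
  rw [smul_eq_mul, h1, ZMod.stdAddChar_coe]
  rw [mul_comm]
  congr 1
  push_cast
  ring_nf

lemma coset_lemma (N : ℕ) [NeZero N] (H : AddSubgroup (ZMod N)) (a b : ZMod N)
    (f : ZMod N → ℂ) (hf : Function.support f ⊆ {x : ZMod N | x - a ∈ H})
    (k : ZMod N) (hk : ∀ x ∈ H, (k - b) * x = 0) :
    ZMod.dft f k = ZMod.stdAddChar (-(a * (k - b))) * ZMod.dft f b := by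
  rw [ZMod.dft_apply, ZMod.dft_apply, Finset.mul_sum]
  refine Finset.sum_congr rfl fun j _ => ?_
  by_cases hj : f j = 0
  · simp [hj]
  · have hH : j - a ∈ H := hf hj
    have h0 : (k - b) * (j - a) = 0 := hk _ hH
    have h1 : j * k = (a * (k - b)) + j * b := by linear_combination h0
    rw [smul_eq_mul, smul_eq_mul, h1, neg_add, AddChar.map_add_eq_mul]
    ring

/-- Uniqueness up to scalar: if two functions are supported in the same coset
a + H and their Fourier transforms are supported in the same coset b + H^⊥,
and the first is nonzero, then the second is a scalar multiple of the first. -/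
theorem unique_up_to_scalar (N : ℕ) [NeZero N] (H : AddSubgroup (ZMod N))
    (a b : ZMod N) (f₁ f₂ : ZMod N → ℂ)
    (hf₁ : Function.support f₁ ⊆ {x : ZMod N | x - a ∈ H})
    (hf₁F : Function.support (dft N f₁) ⊆
      {k : ZMod N | k - b ∈ {k' : ZMod N | ∀ x ∈ H, k' * x = 0}})
    (hf₂ : Function.support f₂ ⊆ {x : ZMod N | x - a ∈ H})
    (hf₂F : Function.support (dft N f₂) ⊆
      {k : ZMod N | k - b ∈ {k' : ZMod N | ∀ x ∈ H, k' * x = 0}})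
    (hne : f₁ ≠ 0) :
    ∃ l : ℂ, f₂ = fun x => l * f₁ x := by
  have hc : (((N : ℝ) ^ (-(1/2 : ℝ)) : ℝ) : ℂ) ≠ 0 := by
    simp only [ne_eq, Complex.ofReal_eq_zero]
    exact ne_of_gt (Real.rpow_pos_of_pos (by exact_mod_cast Nat.pos_of_ne_zero (NeZero.ne N)) _)
  -- translate Fourier support conditions to ZMod.dft
  have hsupp : ∀ f : ZMod N → ℂ, Function.support (dft N f) ⊆
      {k : ZMod N | k - b ∈ {k' : ZMod N | ∀ x ∈ H, k' * x = 0}} →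
      ∀ k : ZMod N, (¬ ∀ x ∈ H, (k - b) * x = 0) → ZMod.dft f k = 0 := by
    intro f hF k hk
    by_contra h
    exact hk (hF (by rw [Function.mem_support, dft_eq_zmod_dft]; exact mul_ne_zero hc h) )
  have hc₁ : ZMod.dft f₁ b ≠ 0 := by
    intro h0
    apply hne
    have : ZMod.dft f₁ = 0 := by
      funext k
      by_cases hk : ∀ x ∈ H, (k - b) * x = 0
      · rw [coset_lemma N H a b f₁ hf₁ k hk, h0, mul_zero]; rfl
      · exact hsupp f₁ hf₁F k hk
    have := ZMod.dft.injective (by rw [this, map_zero] : ZMod.dft f₁ = ZMod.dft 0)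
    exact this
  refine ⟨ZMod.dft f₂ b / ZMod.dft f₁ b, ?_⟩
  have key : ZMod.dft f₂ = ZMod.dft (fun x => (ZMod.dft f₂ b / ZMod.dft f₁ b) * f₁ x) := by
    have hsm : (fun x => (ZMod.dft f₂ b / ZMod.dft f₁ b) * f₁ x)
        = (ZMod.dft f₂ b / ZMod.dft f₁ b) • f₁ := rfl
    rw [hsm, map_smul]
    funext k
    by_cases hk : ∀ x ∈ H, (k - b) * x = 0
    · simp only [Pi.smul_apply, smul_eq_mul]
      rw [coset_lemma N H a b f₁ hf₁ k hk, coset_lemma N H a b f₂ hf₂ k hk]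
      field_simp
    · rw [hsupp f₂ hf₂F k hk]
      simp only [Pi.smul_apply, smul_eq_mul, hsupp f₁ hf₁F k hk, mul_zero]
  exact ZMod.dft.injective key
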